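/- For spin s = 1 (dimension d = 3), every density operator ρ satisfies Var_ρ(L₁) + Var_ρ(L₃) ≥ 7/16, and there exists a density operator attaining equality; i.e. the infimum of Var_ρ(L₁) + Var_ρ(L₃) over all density operators equals 7/16. -/

import Mathlib

open Matrix Complex
open scoped ComplexOrder

noncomputable section

/-- spin value s = j/2 -/
def sVal (j : ℕ) : ℝ := (j : ℝ) / 2

/-- m-value of the k-th basis vector: m = k - s -/
def mVal (j : ℕ) (k : Fin (j + 1)) : ℝ := (k : ℝ) - sVal j

/-- L₃ -/
def L3 (j : ℕ) : Matrix (Fin (j + 1)) (Fin (j + 1)) ℂ :=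
  Matrix.diagonal (fun k => (mVal j k : ℂ))

/-- raising operator L₊ -/
def Lp (j : ℕ) : Matrix (Fin (j + 1)) (Fin (j + 1)) ℂ :=
  Matrix.of fun i k =>
    if (i : ℕ) = (k : ℕ) + 1 then
      ((Real.sqrt (sVal j * (sVal j + 1) - mVal j k * (mVal j k + 1)) : ℝ) : ℂ)
    else 0

/-- lowering operator L₋ -/
def Lm (j : ℕ) : Matrix (Fin (j + 1)) (Fin (j + 1)) ℂ :=
  Matrix.of fun i k =>
    if (i : ℕ) + 1 = (k : ℕ) then
      ((Real.sqrt (sVal j * (sVal j + 1) - mVal j k * (mVal j k - 1)) : ℝ) : ℂ)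
    else 0

/-- L₁ = (L₊ + L₋)/2 -/
def L1 (j : ℕ) : Matrix (Fin (j + 1)) (Fin (j + 1)) ℂ := (1 / 2 : ℂ) • (Lp j + Lm j)

/-- L₂ = (L₊ − L₋)/(2i) -/
def L2 (j : ℕ) : Matrix (Fin (j + 1)) (Fin (j + 1)) ℂ :=
  (1 / (2 * Complex.I)) • (Lp j - Lm j)

/-- density operator -/
def IsDensity {j : ℕ} (ρ : Matrix (Fin (j + 1)) (Fin (j + 1)) ℂ) : Prop :=
  ρ.PosSemidef ∧ ρ.trace = 1

/-- expectation value -/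
def expVal {j : ℕ} (ρ A : Matrix (Fin (j + 1)) (Fin (j + 1)) ℂ) : ℝ :=
  ((ρ * A).trace).re

/-- variance -/
def Var {j : ℕ} (ρ A : Matrix (Fin (j + 1)) (Fin (j + 1)) ℂ) : ℝ :=
  ((ρ * A ^ 2).trace).re - (((ρ * A).trace).re) ^ 2

/-- angular momentum component along a direction e ∈ ℝ³ -/
def dirL (j : ℕ) (e : Fin 3 → ℝ) : Matrix (Fin (j + 1)) (Fin (j + 1)) ℂ :=
  (e 0 : ℂ) • L1 j + (e 1 : ℂ) • L2 j + (e 2 : ℂ) • L3 j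

/-! ### Auxiliary lemmas -/

lemma L1_two_eq : L1 2 = !![0, ((Real.sqrt 2 / 2 : ℝ) : ℂ), 0;
    ((Real.sqrt 2 / 2 : ℝ) : ℂ), 0, ((Real.sqrt 2 / 2 : ℝ) : ℂ);
    0, ((Real.sqrt 2 / 2 : ℝ) : ℂ), 0] := by
  ext i k
  fin_cases i <;> fin_cases k <;>
    simp [L1, Lp, Lm, sVal, mVal, Matrix.vecHead, Matrix.vecTail] <;> norm_num <;> ring

lemma L3_two_eq : L3 2 = !![(-1 : ℂ), 0, 0; 0, 0, 0; 0, 0, 1] := by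
  ext i k
  fin_cases i <;> fin_cases k <;>
    simp [L3, sVal, mVal, Matrix.diagonal, Matrix.vecHead, Matrix.vecTail] <;> norm_num

lemma quad_aux (s c d u1 u2 u3 : ℝ) (hs : s ^ 2 = 2) :
    0 ≤ (3/2 + 2*d + (c^2 + d^2 - 7/16)) * u1^2 + (1 + (c^2 + d^2 - 7/16)) * u2^2
      + (3/2 - 2*d + (c^2 + d^2 - 7/16)) * u3^2 + u1*u3 - 2*s*c*u2*u1 - 2*s*c*u2*u3 := by
  set t : ℝ := c^2 + d^2 with ht
  have hP : (0:ℝ) < t + 9/16 := by positivity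
  have key : 2*(t + 9/16) * ((3/2 + 2*d + (t - 7/16)) * u1^2 + (1 + (t - 7/16)) * u2^2
      + (3/2 - 2*d + (t - 7/16)) * u3^2 + u1*u3 - 2*s*c*u2*u1 - 2*s*c*u2*u3)
      = ((t + 9/16)*(u1 - u3) + 2*d*(u1 + u3))^2
        + 2*((t + 9/16)*u2 - s*c*(u1 + u3))^2 + ((t - 15/16)*(u1 + u3))^2 := by
    rw [ht]
    linear_combination (-2*c^2*(u1 + u3)^2) * hs
  nlinarith [key, hP, sq_nonneg ((t + 9/16)*(u1 - u3) + 2*d*(u1 + u3)),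
    sq_nonneg ((t + 9/16)*u2 - s*c*(u1 + u3)), sq_nonneg ((t - 15/16)*(u1 + u3))]

/-- the certificate matrix L₁² + L₃² − 2c L₁ − 2d L₃ + (c²+d²−7/16)·1, written explicitly -/
def Nmat (c d : ℝ) : Matrix (Fin 3) (Fin 3) ℂ :=
  !![((3/2 + 2*d + (c^2 + d^2 - 7/16) : ℝ) : ℂ), ((-(Real.sqrt 2 * c) : ℝ) : ℂ), ((1/2 : ℝ) : ℂ);
     ((-(Real.sqrt 2 * c) : ℝ) : ℂ), ((1 + (c^2 + d^2 - 7/16) : ℝ) : ℂ), ((-(Real.sqrt 2 * c) : ℝ) : ℂ);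
     ((1/2 : ℝ) : ℂ), ((-(Real.sqrt 2 * c) : ℝ) : ℂ), ((3/2 - 2*d + (c^2 + d^2 - 7/16) : ℝ) : ℂ)]

lemma Nmat_posSemidef (c d : ℝ) : (Nmat c d).PosSemidef := by
  refine Matrix.PosSemidef.of_dotProduct_mulVec_nonneg ?_ ?_
  · ext i k
    fin_cases i <;> fin_cases k <;>
      simp [Nmat, Matrix.conjTranspose_apply, Matrix.vecHead, Matrix.vecTail]
  · intro x
    have hs : Real.sqrt 2 ^ 2 = 2 := Real.sq_sqrt (by norm_num)
    have expand : dotProduct (star x) ((Nmat c d) *ᵥ x) =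
        (starRingEnd ℂ (x 0)) * (((3/2 + 2*d + (c^2 + d^2 - 7/16) : ℝ) : ℂ) * x 0
          + ((-(Real.sqrt 2 * c) : ℝ) : ℂ) * x 1 + ((1/2 : ℝ) : ℂ) * x 2)
        + (starRingEnd ℂ (x 1)) * (((-(Real.sqrt 2 * c) : ℝ) : ℂ) * x 0
          + ((1 + (c^2 + d^2 - 7/16) : ℝ) : ℂ) * x 1 + ((-(Real.sqrt 2 * c) : ℝ) : ℂ) * x 2)
        + (starRingEnd ℂ (x 2)) * (((1/2 : ℝ) : ℂ) * x 0
          + ((-(Real.sqrt 2 * c) : ℝ) : ℂ) * x 1 + ((3/2 - 2*d + (c^2 + d^2 - 7/16) : ℝ) : ℂ) * x 2) := by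
      simp [dotProduct, Matrix.mulVec, Nmat, Fin.sum_univ_three, Matrix.vecHead, Matrix.vecTail]
      try ring
    rw [expand, Complex.le_def]
    constructor
    · simp only [Complex.zero_re, Complex.add_re, Complex.mul_re, Complex.add_im, Complex.mul_im,
        Complex.conj_re, Complex.conj_im, Complex.ofReal_re, Complex.ofReal_im]
      have h1 := quad_aux (Real.sqrt 2) c d (x 0).re (x 1).re (x 2).re hs
      have h2 := quad_aux (Real.sqrt 2) c d (x 0).im (x 1).im (x 2).im hs
      nlinarith [h1, h2]
    · simp only [Complex.zero_im, Complex.add_im, Complex.add_re, Complex.mul_im, Complex.mul_re,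
        Complex.conj_re, Complex.conj_im, Complex.ofReal_re, Complex.ofReal_im]
      ring

lemma trace_re_nonneg_of_psd {n : Type*} [Fintype n] [DecidableEq n]
    {M : Matrix n n ℂ} (hM : M.PosSemidef) : 0 ≤ M.trace.re := by
  have h : ∀ i, 0 ≤ (M i i).re := by
    intro i
    have h2 := hM.dotProduct_mulVec_nonneg (Pi.single i 1)
    have h3 : dotProduct (star (Pi.single i 1)) (M *ᵥ (Pi.single i 1)) = M i i := by
      simp [dotProduct, Matrix.mulVec, Pi.single_apply]
    rw [h3] at h2
    exact (Complex.le_def.mp h2).1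
  rw [Matrix.trace, Complex.re_sum]
  exact Finset.sum_nonneg fun i _ => h i

lemma trace_mul_psd_re_nonneg {n : Type*} [Fintype n] [DecidableEq n]
    {ρ A : Matrix n n ℂ} (hρ : ρ.PosSemidef) (hA : A.PosSemidef) :
    0 ≤ ((ρ * A).trace).re := by
  obtain ⟨B, rfl⟩ : ∃ B : Matrix n n ℂ, A = Bᴴ * B := by
    open scoped MatrixOrder in
    obtain ⟨B, hB⟩ := CStarAlgebra.nonneg_iff_eq_star_mul_self.mp hA.nonneg
    exact ⟨B, hB⟩
  have h1 : (ρ * (Bᴴ * B)).trace = (B * ρ * Bᴴ).trace := by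
    rw [Matrix.trace_mul_cycle B ρ Bᴴ, Matrix.trace_mul_comm, Matrix.mul_assoc]
  rw [h1]
  exact trace_re_nonneg_of_psd (hρ.mul_mul_conjTranspose_same B)

set_option maxHeartbeats 1000000 in
lemma Nmat_decomp (a b : ℝ) :
    Nmat a b = (L1 2) ^ 2 + (L3 2) ^ 2 - ((2*a : ℝ) : ℂ) • L1 2 - ((2*b : ℝ) : ℂ) • L3 2
      + ((a^2 + b^2 - 7/16 : ℝ) : ℂ) • (1 : Matrix (Fin 3) (Fin 3) ℂ) := by
  have hs : ((Real.sqrt 2 : ℝ) : ℂ) ^ 2 = 2 := by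
    norm_cast
    exact Real.sq_sqrt (by norm_num)
  rw [L1_two_eq, L3_two_eq, pow_two, pow_two, Matrix.one_fin_three]
  ext i k
  fin_cases i <;> fin_cases k <;>
    · simp [Matrix.mul_apply, Fin.sum_univ_three, Nmat,
        Matrix.vecHead, Matrix.vecTail]
      push_cast
      first
      | ring1
      | linear_combination (1/2 : ℂ) * hs
      | linear_combination (1/4 : ℂ) * hs
      | linear_combination (-1/2 : ℂ) * hs
      | linear_combination (-1/4 : ℂ) * hs

/-- The optimal state vector (√3/4, √10/4, √3/4) as a rank-one factor. -/
def Wopt : Matrix (Fin 3) (Fin 3) ℂ :=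
  !![((Real.sqrt 3 / 4 : ℝ) : ℂ), 0, 0;
     ((Real.sqrt 10 / 4 : ℝ) : ℂ), 0, 0;
     ((Real.sqrt 3 / 4 : ℝ) : ℂ), 0, 0]

/-- for spin s = 1 the optimal lower bound on Var(L₁) + Var(L₃) is 7/16. -/
theorem two_component_bound_spin_one :
    (∀ ρ : Matrix (Fin (2 + 1)) (Fin (2 + 1)) ℂ, IsDensity ρ →
      7 / 16 ≤ Var ρ (L1 2) + Var ρ (L3 2)) ∧
    (∃ ρ : Matrix (Fin (2 + 1)) (Fin (2 + 1)) ℂ, IsDensity ρ ∧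
      Var ρ (L1 2) + Var ρ (L3 2) = 7 / 16) := by
  constructor
  · rintro ρ ⟨hpsd, htr⟩
    set a : ℝ := ((ρ * L1 2).trace).re with ha
    set b : ℝ := ((ρ * L3 2).trace).re with hb
    have key : 0 ≤ ((ρ * Nmat a b).trace).re := trace_mul_psd_re_nonneg hpsd (Nmat_posSemidef a b)
    rw [Nmat_decomp a b] at key
    simp only [Matrix.mul_add, Matrix.mul_sub, Matrix.mul_smul, Matrix.mul_one,
      Matrix.trace_add, Matrix.trace_sub, Matrix.trace_smul, smul_eq_mul, htr, mul_one,
      Complex.add_re, Complex.sub_re, Complex.re_ofReal_mul, Complex.ofReal_re] at key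
    simp only [Var]
    nlinarith [key]
  · have hWH : Woptᴴ = !![((Real.sqrt 3 / 4 : ℝ) : ℂ), ((Real.sqrt 10 / 4 : ℝ) : ℂ),
        ((Real.sqrt 3 / 4 : ℝ) : ℂ); 0, 0, 0; 0, 0, 0] := by
      ext i k
      fin_cases i <;> fin_cases k <;>
        simp [Wopt, Matrix.conjTranspose_apply, Matrix.vecHead, Matrix.vecTail]
    have h2 : Real.sqrt 2 ^ 2 = 2 := Real.sq_sqrt (by norm_num)
    have h3 : Real.sqrt 3 ^ 2 = 3 := Real.sq_sqrt (by norm_num)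
    have h10 : Real.sqrt 10 ^ 2 = 10 := Real.sq_sqrt (by norm_num)
    refine ⟨Wopt * Woptᴴ, ⟨Matrix.posSemidef_self_mul_conjTranspose Wopt, ?_⟩, ?_⟩
    · rw [hWH]
      simp [Matrix.trace_fin_three, Matrix.mul_apply, Fin.sum_univ_three,
        Wopt, Matrix.vecHead, Matrix.vecTail]
      have h3c : ((Real.sqrt 3 : ℝ) : ℂ) ^ 2 = 3 := by
        norm_cast
      have h10c : ((Real.sqrt 10 : ℝ) : ℂ) ^ 2 = 10 := by
        norm_cast
      push_cast
      linear_combination ((1:ℂ)/8) * h3c + ((1:ℂ)/16) * h10c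
    · simp only [Var, L1_two_eq, L3_two_eq, pow_two]
      rw [hWH]
      simp [Matrix.trace_fin_three, Matrix.mul_apply, Fin.sum_univ_three,
        Wopt, Matrix.vecHead, Matrix.vecTail, Complex.add_re, Complex.mul_re,
        Complex.add_im, Complex.mul_im, Complex.ofReal_re, Complex.ofReal_im]
      ring_nf
      rw [h2, h3, h10]
      norm_num
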